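/- Let f : Fin m → Fin a and g : Fin m → Fin b be surjective functions. Then there exist n : ℕ and surjective functions p₀ : Fin a → Fin n and p₁ : Fin b → Fin n with p₀ ∘ f = p₁ ∘ g, such that for every k : ℕ and surjective functions q₀ : Fin a → Fin k, q₁ : Fin b → Fin k with q₀ ∘ f = q₁ ∘ g there exists a unique function h : Fin n → Fin k with h ∘ p₀ = q₀ and h ∘ p₁ = q₁; moreover this unique h is automatically surjective. (In other words, the category whose objects are the finite sets Fin n and whose morphisms are surjective functions has pushouts, computed as in the category of finite sets and all functions.) -/

import Mathlib

/-- The category of finite sets `Fin n` and surjective functions has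
pushouts, computed as in the category of finite sets and all functions. -/
theorem slin_surjections_have_pushouts {m a b : ℕ}
    (f : Fin m → Fin a) (g : Fin m → Fin b)
    (hf : Function.Surjective f) (hg : Function.Surjective g) :
    ∃ (n : ℕ) (p₀ : Fin a → Fin n) (p₁ : Fin b → Fin n),
      Function.Surjective p₀ ∧ Function.Surjective p₁ ∧ p₀ ∘ f = p₁ ∘ g ∧
      ∀ (k : ℕ) (q₀ : Fin a → Fin k) (q₁ : Fin b → Fin k),
        Function.Surjective q₀ → Function.Surjective q₁ → q₀ ∘ f = q₁ ∘ g →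
        (∃! h : Fin n → Fin k, h ∘ p₀ = q₀ ∧ h ∘ p₁ = q₁) ∧
        ∀ h : Fin n → Fin k, h ∘ p₀ = q₀ → h ∘ p₁ = q₁ → Function.Surjective h := by
  classical
  set r : (Fin a ⊕ Fin b) → (Fin a ⊕ Fin b) → Prop :=
    fun x y => ∃ i, x = Sum.inl (f i) ∧ y = Sum.inr (g i) with hr
  obtain ⟨n, ⟨e⟩⟩ := Finite.exists_equiv_fin (Quot r)
  refine ⟨n, fun x => e (Quot.mk r (Sum.inl x)), fun y => e (Quot.mk r (Sum.inr y)),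
    ?_, ?_, ?_, ?_⟩
  · intro z
    obtain ⟨s, hs⟩ := Quot.exists_rep (e.symm z)
    cases s with
    | inl x => exact ⟨x, by dsimp only; rw [hs]; simp⟩
    | inr y =>
      obtain ⟨i, hi⟩ := hg y
      refine ⟨f i, ?_⟩
      have : Quot.mk r (Sum.inl (f i)) = Quot.mk r (Sum.inr y) := by
        apply Quot.sound; exact ⟨i, rfl, by rw [hi]⟩
      dsimp only; rw [this, hs]; simp
  · intro z
    obtain ⟨s, hs⟩ := Quot.exists_rep (e.symm z)
    cases s with
    | inr y => exact ⟨y, by dsimp only; rw [hs]; simp⟩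
    | inl x =>
      obtain ⟨i, hi⟩ := hf x
      refine ⟨g i, ?_⟩
      have : Quot.mk r (Sum.inl x) = Quot.mk r (Sum.inr (g i)) := by
        apply Quot.sound; exact ⟨i, by rw [hi], rfl⟩
      dsimp only; rw [← this, hs]; simp
  · funext i
    simp only [Function.comp_apply]
    congr 1
    exact Quot.sound ⟨i, rfl, rfl⟩
  · intro k q₀ q₁ hq₀ hq₁ hcomm
    have hsurjall : ∀ h : Fin n → Fin k, h ∘ (fun x => e (Quot.mk r (Sum.inl x))) = q₀ →
        h ∘ (fun y => e (Quot.mk r (Sum.inr y))) = q₁ → Function.Surjective h := by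
      intro h h0 _ z
      obtain ⟨x, hx⟩ := hq₀ z
      exact ⟨e (Quot.mk r (Sum.inl x)), by rw [← hx, ← h0]; rfl⟩
    refine ⟨?_, hsurjall⟩
    have hresp : ∀ x y, r x y → Sum.elim q₀ q₁ x = Sum.elim q₀ q₁ y := by
      rintro x y ⟨i, rfl, rfl⟩
      simpa using congrFun hcomm i
    refine ⟨(Quot.lift (Sum.elim q₀ q₁) hresp) ∘ e.symm, ⟨?_, ?_⟩, ?_⟩
    · funext x; simp
    · funext y; simp
    · rintro h ⟨h0, h1⟩
      funext z
      obtain ⟨s, hs⟩ := Quot.exists_rep (e.symm z)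
      have hz : z = e (Quot.mk r s) := by rw [hs]; simp
      cases s with
      | inl x => rw [hz]; simpa using (congrFun h0 x).trans (by simp)
      | inr y => rw [hz]; simpa using (congrFun h1 y).trans (by simp)
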